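/- Artin's induction theorem: for any finite group G and any virtual character ρ ∈ R(G) (with rational coefficients), there exist cyclic subgroups H_1,…,H_m ≤ G and virtual characters φ_k ∈ R(H_k) with rational coefficients such that ρ = Σ_{k=1}^m Ind_{H_k}^G φ_k. -/

import Mathlib

open scoped BigOperators Classical
open CategoryTheory MonoidalCategory

/-- The induced class function `Ind_H^G φ` of a function `φ` on a subgroup `H ≤ G`. -/
noncomputable def indChar {G : Type*} [Group G] [Fintype G] (H : Subgroup G) (φ : H → ℂ) :
    G → ℂ :=
  fun g => (Nat.card H : ℂ)⁻¹ *
    ∑ x : G, if h : x⁻¹ * g * x ∈ H then φ ⟨x⁻¹ * g * x, h⟩ else 0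

/-- The character `Ind_H^G 1` induced from the trivial representation of `H`. -/
noncomputable def IndTrivChar {G : Type*} [Group G] [Fintype G] (H : Subgroup G) : G → ℂ :=
  indChar H fun _ => 1

/-- `R(G)`: the ℚ-span of the characters of finite-dimensional complex representations. -/
noncomputable def charSpan (G : Type) [Group G] : Submodule ℚ (G → ℂ) :=
  Submodule.span ℚ {f | ∃ V : FDRep ℂ G, f = V.character}

/-- Functions with rational values, as a ℚ-submodule of `G → ℂ`. -/
noncomputable def ratValued (G : Type*) : Submodule ℚ (G → ℂ) where
  carrier := {f | ∀ g, ∃ q : ℚ, f g = q}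
  add_mem' := by
    intro f g hf hg x
    obtain ⟨a, ha⟩ := hf x
    obtain ⟨b, hb⟩ := hg x
    exact ⟨a + b, by simp [ha, hb]⟩
  zero_mem' := fun x => ⟨0, by simp⟩
  smul_mem' := by
    intro c f hf x
    obtain ⟨a, ha⟩ := hf x
    exact ⟨c * a, by simp [ha, Rat.smul_def]⟩

/-- `R_rat(G)`: virtual characters with rational values. -/
noncomputable def Rrat (G : Type) [Group G] : Submodule ℚ (G → ℂ) :=
  charSpan G ⊓ ratValued G

/-- `S(G)`: the ℚ-span of the induced trivial characters `Ind_H^G 1`. -/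
noncomputable def indTrivSpan (G : Type*) [Group G] [Fintype G] : Submodule ℚ (G → ℂ) :=
  Submodule.span ℚ (Set.range (IndTrivChar (G := G)))

section helpers

lemma charSpan_comp {G H : Type} [Group G] [Group H] (f : H →* G) {ρ : G → ℂ}
    (hρ : ρ ∈ charSpan G) : (fun h => ρ (f h)) ∈ charSpan H := by
  induction hρ using Submodule.span_induction with
  | mem x hx =>
    obtain ⟨V, rfl⟩ := hx
    exact Submodule.subset_span ⟨FDRep.of (V.ρ.comp f), rfl⟩
  | zero => exact Submodule.zero_mem _
  | add x y _ _ hx hy => exact Submodule.add_mem _ hx hy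
  | smul c x _ hx => exact Submodule.smul_mem _ c hx

lemma charSpan_mul {G : Type} [Group G] {ρ σ : G → ℂ}
    (hρ : ρ ∈ charSpan G) (hσ : σ ∈ charSpan G) : ρ * σ ∈ charSpan G := by
  induction hρ using Submodule.span_induction with
  | mem x hx =>
    obtain ⟨V, rfl⟩ := hx
    induction hσ using Submodule.span_induction with
    | mem y hy =>
      obtain ⟨W, rfl⟩ := hy
      exact Submodule.subset_span ⟨V ⊗ W, (FDRep.char_tensor V W).symm⟩
    | zero => simpa using Submodule.zero_mem (charSpan G)
    | add y z _ _ hy hz => simpa [mul_add] using Submodule.add_mem _ hy hz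
    | smul c y _ hy =>
      have := Submodule.smul_mem _ c hy
      convert this using 1
      funext i
      simp [mul_smul_comm]
  | zero => simpa using Submodule.zero_mem (charSpan G)
  | add x y _ _ hx hy => simpa [add_mul] using Submodule.add_mem _ hx hy
  | smul c x _ hx => simpa [smul_mul_assoc] using Submodule.smul_mem _ c hx

lemma charSpan_conj {G : Type} [Group G] {ρ : G → ℂ} (hρ : ρ ∈ charSpan G) (g x : G) :
    ρ (x⁻¹ * g * x) = ρ g := by
  induction hρ using Submodule.span_induction with
  | mem f hf =>
    obtain ⟨V, rfl⟩ := hf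
    have := FDRep.char_conj V g x⁻¹
    simpa using this
  | zero => simp
  | add f h _ _ hf hh => simp [hf, hh]
  | smul c f _ hf => simp [hf]

lemma perm_char {G : Type} [Group G] (X : Type) [Fintype X] [MulAction G X] (g : G) :
    (FDRep.of (Representation.ofMulAction ℂ G X)).character g
      = (Finset.univ.filter fun x : X => g • x = x).card := by
  rw [FDRep.character]
  change (LinearMap.trace ℂ (MonoidAlgebra ℂ X)) (Representation.ofMulAction ℂ G X g) = _
  rw [LinearMap.trace_eq_matrix_trace ℂ (MonoidAlgebra.basis X ℂ)]
  rw [Matrix.trace]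
  rw [Finset.card_filter]
  push_cast
  apply Finset.sum_congr rfl
  intro x _
  rw [Matrix.diag_apply, LinearMap.toMatrix_apply, MonoidAlgebra.basis_apply,
    Representation.ofMulAction_single]
  change (MonoidAlgebra.single (g • x) (1:ℂ)).coeff x = _
  simp [MonoidAlgebra.coeff_single, Finsupp.single_apply]

lemma indicator_subgroup_mem {A : Type} [Group A] [Fintype A] (hc : ∀ x y : A, x * y = y * x)
    (D : Subgroup A) :
    (fun a => if a ∈ D then (Nat.card (A ⧸ D) : ℂ) else 0) ∈ charSpan A := by
  apply Submodule.subset_span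
  refine ⟨FDRep.of (Representation.ofMulAction ℂ A (A ⧸ D)), ?_⟩
  funext a
  rw [perm_char]
  have key : ∀ c : A ⧸ D, (a • c = c) ↔ a ∈ D := by
    intro c
    induction c using QuotientGroup.induction_on with
    | H x =>
      change (QuotientGroup.mk (a * x) : A ⧸ D) = QuotientGroup.mk x ↔ _
      rw [QuotientGroup.eq]
      have hx : (a * x)⁻¹ * x = a⁻¹ := by
        rw [mul_inv_rev, mul_assoc, hc a⁻¹ x, inv_mul_cancel_left]
      rw [hx, inv_mem_iff]
  by_cases ha : a ∈ D
  · simp [key, ha, Nat.card_eq_fintype_card]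
  · simp [key, ha]

lemma card_lt_of_lt {A : Type} [Group A] [Fintype A] {D' D : Subgroup A} (h : D' < D) :
    Nat.card D' < Nat.card D := by
  have h1 : Nat.card D' = ((D' : Set A)).ncard := (Nat.card_coe_set_eq _)
  have h2 : Nat.card D = ((D : Set A)).ncard := (Nat.card_coe_set_eq _)
  rw [h1, h2]
  exact Set.ncard_lt_ncard (by exact_mod_cast h) (Set.toFinite _)

lemma one_D_mem {A : Type} [Group A] [Fintype A] (hc : ∀ x y : A, x * y = y * x)
    (D : Subgroup A) :
    (fun a => if a ∈ D then (1:ℂ) else 0) ∈ charSpan A := by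
  have hN : (Nat.card (A ⧸ D) : ℂ) ≠ 0 := by
    exact_mod_cast Nat.card_pos.ne'
  have := Submodule.smul_mem (charSpan A) ((Nat.card (A ⧸ D) : ℚ)⁻¹)
    (indicator_subgroup_mem hc D)
  convert this using 1
  funext a
  by_cases ha : a ∈ D <;>
    simp [ha, Rat.smul_def, inv_mul_cancel₀ hN]

lemma genInd_mem_aux {A : Type} [Group A] [Fintype A] (hc : ∀ x y : A, x * y = y * x) :
    ∀ n : ℕ, ∀ D : Subgroup A, Nat.card D ≤ n →
      (fun a => if Subgroup.zpowers a = D then (1:ℂ) else 0) ∈ charSpan A := by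
  intro n
  induction n with
  | zero =>
    intro D hD
    exact absurd (Nat.card_pos.trans_le hD) (lt_irrefl 0)
  | succ n ih =>
    intro D hD
    have key : (fun a => if Subgroup.zpowers a = D then (1:ℂ) else 0)
        = (fun a => if a ∈ D then (1:ℂ) else 0)
          - ∑ D' ∈ Finset.univ.filter (· < D),
              (fun a => if Subgroup.zpowers a = D' then (1:ℂ) else 0) := by
      funext a
      set Z := Subgroup.zpowers a with hZ
      have hsum : (∑ D' ∈ Finset.univ.filter (· < D),
          (fun a => if Subgroup.zpowers a = D' then (1:ℂ) else 0)) a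
          = if Z ∈ Finset.univ.filter (· < D) then (1:ℂ) else 0 := by
        rw [Finset.sum_apply]
        exact Finset.sum_ite_eq _ Z (fun _ => (1:ℂ))
      rw [Pi.sub_apply, hsum]
      by_cases h1 : Z = D
      · have haD : a ∈ D := h1 ▸ Subgroup.mem_zpowers a
        simp [h1, haD, lt_irrefl]
      · by_cases h2 : Z < D
        · have haD : a ∈ D := h2.le (Subgroup.mem_zpowers a)
          simp [h1, h2, haD]
        · have haD : a ∉ D := by
            intro haD
            rcases lt_or_eq_of_le (Subgroup.zpowers_le.mpr haD) with h | h
            exacts [h2 h, h1 h]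
          simp [h1, h2, haD]
    rw [key]
    refine Submodule.sub_mem _ (one_D_mem hc D) (Submodule.sum_mem _ ?_)
    intro D' hD'
    have hlt : D' < D := (Finset.mem_filter.mp hD').2
    exact ih D' (Nat.le_of_lt_succ ((card_lt_of_lt hlt).trans_le hD))

lemma genInd_mem {A : Type} [Group A] [Fintype A] (hc : ∀ x y : A, x * y = y * x)
    (D : Subgroup A) :
    (fun a => if Subgroup.zpowers a = D then (1:ℂ) else 0) ∈ charSpan A :=
  genInd_mem_aux hc (Nat.card D) D le_rfl

lemma zpowers_comm {G : Type} [Group G] (z : G) (x y : Subgroup.zpowers z) :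
    x * y = y * x := by
  obtain ⟨j, hj⟩ := Subgroup.mem_zpowers_iff.mp x.2
  obtain ⟨k, hk⟩ := Subgroup.mem_zpowers_iff.mp y.2
  apply Subtype.ext
  push_cast
  rw [← hj, ← hk, ← zpow_add, ← zpow_add, add_comm]

lemma isCyclic_zpowers {G : Type} [Group G] (z : G) : IsCyclic (Subgroup.zpowers z) := by
  refine ⟨⟨⟨z, Subgroup.mem_zpowers z⟩, fun x => ?_⟩⟩
  obtain ⟨k, hk⟩ := Subgroup.mem_zpowers_iff.mp x.2
  exact Subgroup.mem_zpowers_iff.mpr ⟨k, Subtype.ext (by rw [SubgroupClass.coe_zpow]; exact hk)⟩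

lemma zpowers_coe_top_iff {G : Type} [Group G] (z : G) (y : Subgroup.zpowers z) :
    Subgroup.zpowers (y : Subgroup.zpowers z) = (⊤ : Subgroup (Subgroup.zpowers z))
      ↔ Subgroup.zpowers (y : G) = Subgroup.zpowers z := by
  constructor
  · intro h
    apply le_antisymm (Subgroup.zpowers_le.mpr y.2)
    intro w hw
    have hz : (⟨z, Subgroup.mem_zpowers z⟩ : Subgroup.zpowers z) ∈
        Subgroup.zpowers (y : Subgroup.zpowers z) := h ▸ Subgroup.mem_top _
    obtain ⟨k, hk⟩ := Subgroup.mem_zpowers_iff.mp hz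
    have hky : (y : G) ^ k = z := by
      have := congrArg (Subtype.val) hk
      rwa [SubgroupClass.coe_zpow] at this
    obtain ⟨m, hm⟩ := Subgroup.mem_zpowers_iff.mp hw
    refine Subgroup.mem_zpowers_iff.mpr ⟨k * m, ?_⟩
    rw [zpow_mul, hky, hm]
  · intro h
    rw [eq_top_iff]
    intro u _
    have : (u : G) ∈ Subgroup.zpowers (y : G) := by rw [h]; exact u.2
    obtain ⟨k, hk⟩ := Subgroup.mem_zpowers_iff.mp this
    exact Subgroup.mem_zpowers_iff.mpr ⟨k, Subtype.ext (by rw [SubgroupClass.coe_zpow]; exact hk)⟩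

end helpers

/-- Artin's induction theorem: every virtual character `ρ ∈ R(G)` (with
rational coefficients) is a sum `Σ_k Ind_{H_k}^G φ_k` over cyclic subgroups `H_k ≤ G`
with `φ_k ∈ R(H_k)`. -/
theorem artin_induction (G : Type) [Group G] [Fintype G] (ρ : G → ℂ)
    (hρ : ρ ∈ charSpan G) :
    ∃ (m : ℕ) (H : Fin m → Subgroup G) (φ : (i : Fin m) → (H i) → ℂ),
      (∀ i, IsCyclic (H i)) ∧ (∀ i, φ i ∈ charSpan (H i)) ∧
      ρ = ∑ i, indChar (H i) (φ i) := by
  classical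
  set n : G → ℕ :=
    fun z => (Finset.univ.filter fun x => Subgroup.zpowers x = Subgroup.zpowers z).card with hn
  set q : G → ℚ :=
    fun z => (Nat.card (Subgroup.zpowers z) : ℚ) / ((Fintype.card G : ℚ) * (n z : ℚ)) with hq
  set Φ : (z : G) → (Subgroup.zpowers z) → ℂ := fun z y =>
    (q z : ℂ) * ((if Subgroup.zpowers (y : G) = Subgroup.zpowers z then (1:ℂ) else 0) * ρ y)
    with hΦ
  have hnz : ∀ z : G, n z ≠ 0 := by
    intro z
    apply Finset.card_ne_zero_of_mem (a := z)
    simp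
  have hCG : (Fintype.card G : ℂ) ≠ 0 := by
    exact_mod_cast Fintype.card_ne_zero
  have hmem : ∀ z : G, Φ z ∈ charSpan (Subgroup.zpowers z) := by
    intro z
    have h1 : (fun y : Subgroup.zpowers z =>
        if Subgroup.zpowers (y : G) = Subgroup.zpowers z then (1:ℂ) else 0)
        ∈ charSpan ↥(Subgroup.zpowers z) := by
      have heq : (fun y : Subgroup.zpowers z =>
          if Subgroup.zpowers (y : G) = Subgroup.zpowers z then (1:ℂ) else 0)
          = fun y : Subgroup.zpowers z =>
            if Subgroup.zpowers y = (⊤ : Subgroup (Subgroup.zpowers z)) then (1:ℂ) else 0 := by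
        funext y
        exact (if_congr (zpowers_coe_top_iff z y) rfl rfl).symm
      rw [heq]
      exact genInd_mem (zpowers_comm z) ⊤
    have h2 : (fun y : Subgroup.zpowers z => ρ ↑y) ∈ charSpan ↥(Subgroup.zpowers z) :=
      charSpan_comp (Subgroup.zpowers z).subtype hρ
    have : Φ z = q z • ((fun y : Subgroup.zpowers z =>
        if Subgroup.zpowers (y : G) = Subgroup.zpowers z then (1:ℂ) else 0)
        * fun y : Subgroup.zpowers z => ρ ↑y) := by
      funext y
      simp [hΦ, Rat.smul_def]
    rw [this]
    exact Submodule.smul_mem _ _ (charSpan_mul h1 h2)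
  have key : ρ = ∑ z : G, indChar (Subgroup.zpowers z) (Φ z) := by
    funext g
    rw [Finset.sum_apply]
    have hρc : ∀ x : G, ρ (x⁻¹ * g * x) = ρ g := fun x => charSpan_conj hρ g x
    have hstep : ∀ z : G, indChar (Subgroup.zpowers z) (Φ z) g
        = ∑ x : G, (if Subgroup.zpowers (x⁻¹ * g * x) = Subgroup.zpowers z
            then ((Fintype.card G : ℂ) * (n z : ℂ))⁻¹ * ρ g else 0) := by
      intro z
      have hN : (Nat.card (Subgroup.zpowers z) : ℂ) ≠ 0 := by
        exact_mod_cast Nat.card_pos.ne'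
      have hnzc : (n z : ℂ) ≠ 0 := by exact_mod_cast hnz z
      simp only [indChar]
      rw [Finset.mul_sum]
      apply Finset.sum_congr rfl
      intro x _
      by_cases hzp : Subgroup.zpowers (x⁻¹ * g * x) = Subgroup.zpowers z
      · have hm : x⁻¹ * g * x ∈ Subgroup.zpowers z := by
          rw [← hzp]; exact Subgroup.mem_zpowers _
        rw [dif_pos hm, if_pos hzp]
        simp only [hΦ]
        rw [if_pos hzp, hρc x, hq]
        push_cast
        field_simp
      · by_cases hm : x⁻¹ * g * x ∈ Subgroup.zpowers z
        · rw [dif_pos hm, if_neg hzp]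
          simp only [hΦ]
          rw [if_neg hzp]
          ring
        · rw [dif_neg hm, if_neg hzp, mul_zero]
    rw [Finset.sum_congr rfl (fun z _ => hstep z), Finset.sum_comm]
    have hinner : ∀ x : G, ∑ z : G, (if Subgroup.zpowers (x⁻¹ * g * x) = Subgroup.zpowers z
        then ((Fintype.card G : ℂ) * (n z : ℂ))⁻¹ * ρ g else 0)
        = (Fintype.card G : ℂ)⁻¹ * ρ g := by
      intro x
      set w := x⁻¹ * g * x with hw
      have hone : ∑ z : G, (if Subgroup.zpowers w = Subgroup.zpowers z
          then ((n z : ℂ))⁻¹ else 0) = 1 := by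
        rw [← Finset.sum_filter]
        set T := Finset.univ.filter (fun z => Subgroup.zpowers w = Subgroup.zpowers z) with hT
        have hwT : w ∈ T := by simp [hT]
        have hcongr : ∀ z ∈ T, ((n z : ℂ))⁻¹ = ((T.card : ℂ))⁻¹ := by
          intro z hz
          have hzz : Subgroup.zpowers w = Subgroup.zpowers z := (Finset.mem_filter.mp hz).2
          have : (Finset.univ.filter fun x => Subgroup.zpowers x = Subgroup.zpowers z) = T := by
            ext u
            simp only [hT, Finset.mem_filter, Finset.mem_univ, true_and]
            rw [← hzz]
            exact eq_comm
          simp only [hn, this]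
        rw [Finset.sum_congr rfl hcongr, Finset.sum_const, nsmul_eq_mul, mul_inv_cancel₀]
        exact_mod_cast Finset.card_ne_zero_of_mem hwT
      calc ∑ z : G, (if Subgroup.zpowers w = Subgroup.zpowers z
            then ((Fintype.card G : ℂ) * (n z : ℂ))⁻¹ * ρ g else 0)
          = ∑ z : G, ((Fintype.card G : ℂ)⁻¹ * ρ g) * (if Subgroup.zpowers w = Subgroup.zpowers z
            then ((n z : ℂ))⁻¹ else 0) := by
            apply Finset.sum_congr rfl
            intro z _
            by_cases hP : Subgroup.zpowers w = Subgroup.zpowers z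
            · rw [if_pos hP, if_pos hP, mul_inv]
              ring
            · rw [if_neg hP, if_neg hP, mul_zero]
        _ = (Fintype.card G : ℂ)⁻¹ * ρ g := by
            rw [← Finset.mul_sum, hone, mul_one]
    rw [Finset.sum_congr rfl (fun x _ => hinner x), Finset.sum_const, Finset.card_univ,
      nsmul_eq_mul, ← mul_assoc, mul_inv_cancel₀ hCG, one_mul]
  refine ⟨Fintype.card G, fun i => Subgroup.zpowers ((Fintype.equivFin G).symm i),
    fun i => Φ ((Fintype.equivFin G).symm i), fun i => isCyclic_zpowers _,
    fun i => hmem _, ?_⟩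
  rw [(Fintype.equivFin G).symm.sum_comp (fun z => indChar (Subgroup.zpowers z) (Φ z))]
  exact key
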